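/- arXiv:1806.03868 — 2 statements merged into one kernel-verified Lean document; each statement's English description precedes it below -/
import Mathlib

section
/- Let V be an m-ordered orthogonal preserving PSO with V(e_i) = e_i for all i ∈ ℕ. Then V maps the boundary of S into the boundary of S, and maps the relative interior of S (sequences with all coordinates positive) into the relative interior of S. -/
/-- The m-ordered polynomial operator associated to a hypermatrix `P`. -/
noncomputable def psoV (m : ℕ) (P : (Fin m → ℕ) → ℕ → ℝ) (x : ℕ → ℝ) (k : ℕ) : ℝ :=
  ∑' i : Fin m → ℕ, P i k * ∏ j, x (i j)

/-- The hypermatrix is stochastic. -/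
def IsStochastic (m : ℕ) (P : (Fin m → ℕ) → ℕ → ℝ) : Prop :=
  (∀ i k, 0 ≤ P i k) ∧ ∀ i, HasSum (fun k => P i k) 1

/-- symmetry of the hypermatrix in its first m indices. -/
def HypSymm (m : ℕ) (P : (Fin m → ℕ) → ℕ → ℝ) : Prop :=
  ∀ (σ : Equiv.Perm (Fin m)) (i : Fin m → ℕ) (k : ℕ), P (i ∘ σ) k = P i k

/-- membership in the infinite-dimensional simplex S. -/
def inS (x : ℕ → ℝ) : Prop := (∀ i, 0 ≤ x i) ∧ HasSum x 1

/-- the standard basis vector e_i. -/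
def stdBasis (i : ℕ) : ℕ → ℝ := fun n => if n = i then 1 else 0

/-- x and y are orthogonal: disjoint supports. -/
def Orth (x y : ℕ → ℝ) : Prop := ∀ k, x k * y k = 0

/-- V is orthogonal preserving on S. -/
def IsOP (m : ℕ) (P : (Fin m → ℕ) → ℕ → ℝ) : Prop :=
  ∀ x y : ℕ → ℝ, inS x → inS y → Orth x y → Orth (psoV m P x) (psoV m P y)

/-- V is surjective on S. -/
def SurjOnS (m : ℕ) (P : (Fin m → ℕ) → ℕ → ℝ) : Prop :=
  ∀ y : ℕ → ℝ, inS y → ∃ x : ℕ → ℝ, inS x ∧ psoV m P x = y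

set_option maxHeartbeats 1000000 in
lemma hasSum_pi_prod {m : ℕ} {x : ℕ → ℝ} (hx0 : ∀ i, 0 ≤ x i) (hx : HasSum x 1) :
    HasSum (fun i : Fin m → ℕ => ∏ j, x (i j)) 1 := by
  induction m with
  | zero => simpa using hasSum_fintype (fun i : Fin 0 → ℕ => ∏ j, x (i j))
  | succ n ih =>
    have hsum : Summable (fun p : ℕ × (Fin n → ℕ) => x p.1 * ∏ j, x (p.2 j)) := by
      apply (summable_prod_of_nonneg ?_).2 ?_
      · intro p
        exact mul_nonneg (hx0 _) (Finset.prod_nonneg fun j _ => hx0 _)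
      · constructor
        · intro a
          exact ih.summable.mul_left (x a)
        · apply hx.summable.congr
          intro a
          show x a = ∑' b : Fin n → ℕ, x a * ∏ j, x (b j)
          rw [tsum_mul_left, ih.tsum_eq, mul_one]
    have hprod : HasSum (fun p : ℕ × (Fin n → ℕ) => x p.1 * ∏ j, x (p.2 j)) 1 := by
      have := hx.mul ih hsum
      rwa [one_mul] at this
    have key : ((fun i : Fin (n + 1) → ℕ => ∏ j, x (i j)) ∘ (Fin.consEquiv fun _ => ℕ)) =
        fun p : ℕ × (Fin n → ℕ) => x p.1 * ∏ j, x (p.2 j) := by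
      funext p
      simp [Fin.consEquiv, Fin.prod_univ_succ]
    exact ((Fin.consEquiv fun _ : Fin (n + 1) => ℕ).hasSum_iff).1 (key ▸ hprod)

lemma summable_fiber {m : ℕ} {P : (Fin m → ℕ) → ℕ → ℝ} (hP : IsStochastic m P)
    {x : ℕ → ℝ} (hx : inS x) (k : ℕ) :
    Summable (fun i : Fin m → ℕ => P i k * ∏ j, x (i j)) := by
  refine Summable.of_nonneg_of_le
    (fun i => mul_nonneg (hP.1 i k) (Finset.prod_nonneg fun j _ => hx.1 _))
    (fun i => ?_) (hasSum_pi_prod hx.1 hx.2).summable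
  have hPle : P i k ≤ 1 := le_hasSum (hP.2 i) k (fun j _ => hP.1 i j)
  calc P i k * ∏ j, x (i j) ≤ 1 * ∏ j, x (i j) := by
        exact mul_le_mul_of_nonneg_right hPle (Finset.prod_nonneg fun j _ => hx.1 _)
    _ = ∏ j, x (i j) := one_mul _

lemma psoV_inS {m : ℕ} {P : (Fin m → ℕ) → ℕ → ℝ} (hP : IsStochastic m P)
    {x : ℕ → ℝ} (hx : inS x) : inS (psoV m P x) := by
  have hfib : ∀ i : Fin m → ℕ,
      HasSum (fun k => P i k * ∏ j, x (i j)) (∏ j, x (i j)) := by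
    intro i
    simpa [mul_comm] using (hP.2 i).mul_left (∏ j, x (i j))
  have hgsum : Summable (fun p : (Fin m → ℕ) × ℕ => P p.1 p.2 * ∏ j, x (p.1 j)) := by
    apply (summable_prod_of_nonneg ?_).2 ?_
    · intro p
      exact mul_nonneg (hP.1 p.1 p.2) (Finset.prod_nonneg fun j _ => hx.1 _)
    · constructor
      · intro i
        exact (hfib i).summable
      · apply (hasSum_pi_prod hx.1 hx.2).summable.congr
        intro i
        exact ((hfib i).tsum_eq).symm
  have hg1 : HasSum (fun p : (Fin m → ℕ) × ℕ => P p.1 p.2 * ∏ j, x (p.1 j)) 1 := by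
    obtain ⟨t, ht⟩ := hgsum
    have h2 := ht.prod_fiberwise hfib
    rwa [h2.unique (hasSum_pi_prod hx.1 hx.2)] at ht
  refine ⟨fun k => tsum_nonneg fun i =>
    mul_nonneg (hP.1 i k) (Finset.prod_nonneg fun j _ => hx.1 _), ?_⟩
  have hg1' : HasSum (fun p : ℕ × (Fin m → ℕ) => P p.2 p.1 * ∏ j, x (p.2 j)) 1 := by
    have h := ((Equiv.prodComm ℕ (Fin m → ℕ)).hasSum_iff
      (f := fun p : (Fin m → ℕ) × ℕ => P p.1 p.2 * ∏ j, x (p.1 j)) (a := 1)).2 hg1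
    exact h.congr_fun fun p => rfl
  exact hg1'.prod_fiberwise fun k => (summable_fiber hP hx k).hasSum

lemma prod_stdBasis {m : ℕ} (i : ℕ) (f : Fin m → ℕ) :
    (∏ j, stdBasis i (f j)) = if f = fun _ => i then 1 else 0 := by
  by_cases h : f = fun _ => i
  · subst h; simp [stdBasis]
  · obtain ⟨j, hj⟩ : ∃ j, f j ≠ i := by
      by_contra hc; push_neg at hc; exact h (funext hc)
    rw [if_neg h]
    exact Finset.prod_eq_zero (Finset.mem_univ j) (by simp [stdBasis, hj])

lemma inS_stdBasis (i : ℕ) : inS (stdBasis i) :=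
  ⟨fun n => by by_cases h : n = i <;> simp [stdBasis, h], hasSum_ite_eq i 1⟩

theorem stmt5 (m : ℕ) (hm : 1 ≤ m) (P : (Fin m → ℕ) → ℕ → ℝ)
    (hP : IsStochastic m P)
    (hfix : ∀ i : ℕ, psoV m P (stdBasis i) = stdBasis i)
    (hop : IsOP m P) :
    (∀ x : ℕ → ℝ, inS x → (∃ i, x i = 0) → inS (psoV m P x) ∧ ∃ i, psoV m P x i = 0) ∧
    (∀ x : ℕ → ℝ, inS x → (∀ i, 0 < x i) → inS (psoV m P x) ∧ ∀ i, 0 < psoV m P x i) := by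
  have hPconst : ∀ i k : ℕ, P (fun _ => i) k = stdBasis i k := by
    intro i k
    have h1 : psoV m P (stdBasis i) k = P (fun _ => i) k := by
      unfold psoV
      rw [tsum_eq_single (fun _ : Fin m => i)]
      · rw [prod_stdBasis, if_pos rfl, mul_one]
      · intro f hf
        rw [prod_stdBasis, if_neg hf, mul_zero]
    rw [← h1, hfix]
  constructor
  · intro x hx ⟨i, hxi⟩
    refine ⟨psoV_inS hP hx, i, ?_⟩
    have horth : Orth x (stdBasis i) := by
      intro k
      by_cases h : k = i
      · subst h; rw [hxi, zero_mul]
      · simp [stdBasis, h]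
    have := hop x (stdBasis i) hx (inS_stdBasis i) horth i
    rw [hfix] at this
    simpa [stdBasis] using this
  · intro x hx hxp
    refine ⟨psoV_inS hP hx, fun k => ?_⟩
    have hsum := summable_fiber hP hx k
    have hle : P (fun _ => k) k * ∏ j : Fin m, x k ≤ psoV m P x k :=
      Summable.le_tsum hsum (fun _ => k)
        (fun f _ => mul_nonneg (hP.1 f k) (Finset.prod_nonneg fun j _ => hx.1 _))
    have hval : P (fun _ => k) k * ∏ j : Fin m, x k = x k ^ m := by
      rw [hPconst k k, Finset.prod_const]
      simp [stdBasis]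
    rw [hval] at hle
    exact lt_of_lt_of_le (pow_pos (hxp k) m) hle
end

section
/- Let V be a surjective m-ordered PSO on S with V(e_i) = e_i for all i. Then for any finite nonempty set {i_1,...,i_j} ⊂ ℕ with j ≤ m, V maps int Γ_{{i_1,...,i_j}} onto int Γ_{{i_1,...,i_j}}, and every preimage of a point of int Γ_{{i_1,...,i_j}} lies in int Γ_{{i_1,...,i_j}}. -/
/-- membership in the relative interior of the face Γ_A of the simplex. -/
def inIntFace (A : Set ℕ) (x : ℕ → ℝ) : Prop :=
  inS x ∧ (∀ i ∈ A, 0 < x i) ∧ ∀ i ∉ A, x i = 0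

set_option maxHeartbeats 1000000 in
lemma hasSum_prod_pow {x : ℕ → ℝ} {s : ℝ} (hx0 : ∀ n, 0 ≤ x n) (hx : HasSum x s) :
    ∀ m : ℕ, HasSum (fun i : Fin m → ℕ => ∏ j, x (i j)) (s ^ m) := by
  intro m
  induction m with
  | zero =>
      have h := hasSum_single (f := fun i : Fin 0 → ℕ => ∏ j, x (i j)) (fun j => j.elim0)
        (fun b' hb' => absurd (Subsingleton.elim b' _) hb')
      simpa using h
  | succ n IH =>
      have hs1 : Summable fun p : ℕ × (Fin n → ℕ) => x p.1 * ∏ j, x (p.2 j) := by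
        exact Summable.mul_of_nonneg (f := x) (g := fun v : Fin n → ℕ => ∏ j, x (v j))
          hx.summable IH.summable hx0 (fun i => Finset.prod_nonneg fun j _ => hx0 _)
      have hmul : HasSum (fun p : ℕ × (Fin n → ℕ) => x p.1 * ∏ j, x (p.2 j)) (s * s ^ n) :=
        HasSum.mul (f := x) (g := fun v : Fin n → ℕ => ∏ j, x (v j)) hx IH hs1
      have he := (Fin.consEquiv (fun _ : Fin (n + 1) => ℕ)).hasSum_iff
        (f := fun i : Fin (n+1) → ℕ => ∏ j, x (i j)) (a := s ^ (n+1))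
      apply he.mp
      have : ((fun i : Fin (n+1) → ℕ => ∏ j, x (i j)) ∘ (Fin.consEquiv (fun _ : Fin (n + 1) => ℕ)))
          = fun p : ℕ × (Fin n → ℕ) => x p.1 * ∏ j, x (p.2 j) := by
        funext p
        simp [Fin.consEquiv, Fin.prod_univ_succ]
      rw [this, pow_succ']
      exact hmul

section lemmas
variable {m : ℕ} {P : (Fin m → ℕ) → ℕ → ℝ}

lemma summable_term (hP : IsStochastic m P) {x : ℕ → ℝ} (hx : inS x) (k : ℕ) :
    Summable (fun i : Fin m → ℕ => P i k * ∏ j, x (i j)) := by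
  have hprod : HasSum (fun i : Fin m → ℕ => ∏ j, x (i j)) 1 := by
    simpa using hasSum_prod_pow hx.1 hx.2 m
  refine Summable.of_nonneg_of_le
    (fun i => mul_nonneg (hP.1 i k) (Finset.prod_nonneg fun j _ => hx.1 _)) (fun i => ?_)
    hprod.summable
  have hPk : P i k ≤ 1 := le_hasSum (hP.2 i) k (fun j _ => hP.1 i j)
  calc P i k * ∏ j, x (i j) ≤ 1 * ∏ j, x (i j) :=
        mul_le_mul_of_nonneg_right hPk (Finset.prod_nonneg fun j _ => hx.1 _)
    _ = ∏ j, x (i j) := one_mul _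

lemma term_le_psoV (hP : IsStochastic m P) {x : ℕ → ℝ} (hx : inS x) (i : Fin m → ℕ) (k : ℕ) :
    P i k * ∏ j, x (i j) ≤ psoV m P x k :=
  Summable.le_tsum (summable_term hP hx k) i
    (fun j _ => mul_nonneg (hP.1 j k) (Finset.prod_nonneg fun l _ => hx.1 _))

lemma psoV_nonneg (hP : IsStochastic m P) {x : ℕ → ℝ} (hx : ∀ n, 0 ≤ x n) (k : ℕ) :
    0 ≤ psoV m P x k :=
  tsum_nonneg (fun i => mul_nonneg (hP.1 i k) (Finset.prod_nonneg fun l _ => hx _))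

lemma pow_le_psoV (hP : IsStochastic m P) {x : ℕ → ℝ} (hx : inS x) (a k : ℕ) :
    P (fun _ => a) k * x a ^ m ≤ psoV m P x k := by
  have h := term_le_psoV hP hx (fun _ => a) k
  simpa using h

lemma P_const (hfix : ∀ i : ℕ, psoV m P (stdBasis i) = stdBasis i) (a k : ℕ) :
    P (fun _ => a) k = stdBasis a k := by
  have h := congrFun (hfix a) k
  rw [psoV] at h
  rw [tsum_eq_single (fun _ : Fin m => a) ?_] at h
  · simpa [stdBasis] using h
  · intro b' hb'
    have : ∃ j, b' j ≠ a := by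
      by_contra hc
      push_neg at hc
      exact hb' (funext hc)
    obtain ⟨j, hj⟩ := this
    rw [Finset.prod_eq_zero (Finset.mem_univ j) (by simp [stdBasis, hj]), mul_zero]

lemma hasSum_psoV (hP : IsStochastic m P) {x : ℕ → ℝ} (hx : inS x) :
    HasSum (fun k => psoV m P x k) 1 := by
  set f : (Fin m → ℕ) × ℕ → ℝ := fun p => P p.1 p.2 * ∏ j, x (p.1 j) with hf
  have hnn : ∀ p, 0 ≤ f p := fun p =>
    mul_nonneg (hP.1 p.1 p.2) (Finset.prod_nonneg fun l _ => hx.1 _)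
  have hfib : ∀ i : Fin m → ℕ, HasSum (fun k => f (i, k)) (∏ j, x (i j)) := by
    intro i
    have := (hP.2 i).mul_right (∏ j, x (i j))
    simpa using this
  have hprod : HasSum (fun i : Fin m → ℕ => ∏ j, x (i j)) 1 := by
    simpa using hasSum_prod_pow hx.1 hx.2 m
  have hsumf : Summable f := by
    refine (summable_prod_of_nonneg hnn).mpr ⟨fun i => (hfib i).summable, ?_⟩
    have he : (fun i : Fin m → ℕ => ∑' k, f (i, k)) = fun i => ∏ j, x (i j) :=
      funext fun i => (hfib i).tsum_eq
    rw [he]; exact hprod.summable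
  have hftotal : HasSum f 1 := by
    obtain ⟨s, hs⟩ := hsumf
    have h2 := hs.prod_fiberwise hfib
    rwa [show s = 1 from (h2.unique hprod)] at hs
  set e : ℕ × (Fin m → ℕ) ≃ (Fin m → ℕ) × ℕ := Equiv.prodComm _ _ with hedef
  have hg : HasSum (f ∘ e) 1 := (e.hasSum_iff).mpr hftotal
  have hgs : Summable (f ∘ e) := hg.summable
  have hfk : ∀ k : ℕ, Summable fun i : Fin m → ℕ => f (i, k) := by
    have := ((summable_prod_of_nonneg (f := f ∘ e) (fun p => hnn _)).mp hgs).1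
    exact this
  have hfin := hg.prod_fiberwise (g := fun k => ∑' i : Fin m → ℕ, f (i, k))
    (fun k => (hfk k).hasSum)
  exact hfin

lemma psoV_eq_zero_of_supp (hP : IsStochastic m P) (C : Finset ℕ)
    (hKL : ∀ (i : Fin m → ℕ) (k : ℕ), (∀ j, i j ∈ C) → k ∉ C → P i k = 0)
    {x : ℕ → ℝ} (hx : ∀ n, n ∉ C → x n = 0) {k : ℕ} (hk : k ∉ C) :
    psoV m P x k = 0 := by
  rw [psoV]
  rw [show (fun i : Fin m → ℕ => P i k * ∏ j, x (i j)) = fun _ => (0 : ℝ) from ?_, tsum_zero]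
  funext i
  by_cases h : ∀ j, i j ∈ C
  · rw [hKL i k h hk, zero_mul]
  · push_neg at h
    obtain ⟨j, hj⟩ := h
    rw [Finset.prod_eq_zero (Finset.mem_univ j) (hx _ hj), mul_zero]

end lemmas

lemma keyLemma {m : ℕ} (hm : 1 ≤ m) {P : (Fin m → ℕ) → ℕ → ℝ}
    (hP : IsStochastic m P) (hsur : SurjOnS m P)
    (hfix : ∀ i : ℕ, psoV m P (stdBasis i) = stdBasis i) :
    ∀ (i : Fin m → ℕ) (k : ℕ), (∀ j, i j ≠ k) → P i k = 0 := by
  suffices H : ∀ (n : ℕ) (i : Fin m → ℕ) (k : ℕ),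
      (Finset.image i Finset.univ).card ≤ n → (∀ j, i j ≠ k) → P i k = 0 by
    exact fun i k h => H _ i k le_rfl h
  intro n
  induction n with
  | zero =>
      intro i k hc _
      exfalso
      have hne : (Finset.image i Finset.univ).Nonempty :=
        ⟨i ⟨0, hm⟩, Finset.mem_image_of_mem _ (Finset.mem_univ _)⟩
      have := Finset.card_pos.mpr hne
      omega
  | succ n IH =>
      intro i0 k0 hcard hk0
      set A : Finset ℕ := Finset.image i0 Finset.univ with hAdef
      have hk0A : k0 ∉ A := by
        simp only [hAdef, Finset.mem_image, Finset.mem_univ, true_and]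
        rintro ⟨j, hj⟩
        exact hk0 j hj
      have hAne : A.Nonempty := ⟨i0 ⟨0, hm⟩, Finset.mem_image_of_mem _ (Finset.mem_univ _)⟩
      have hApos : (0 : ℝ) < (A.card : ℝ) := by
        exact_mod_cast Finset.card_pos.mpr hAne
      set y : ℕ → ℝ := fun n => if n ∈ A then ((A.card : ℝ))⁻¹ else 0 with hydef
      have hy : inS y := by
        constructor
        · intro q
          by_cases h : q ∈ A
          · simp only [hydef, if_pos h]
            positivity
          · simp [hydef, h]
        · have h1 : HasSum y (∑ b ∈ A, y b) :=
            hasSum_sum_of_ne_finset_zero (fun b hb => by simp [hydef, hb])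
          have h2 : ∑ b ∈ A, y b = 1 := by
            have hcg : ∀ b ∈ A, y b = (A.card : ℝ)⁻¹ := fun b hb => by simp [hydef, hb]
            rw [Finset.sum_congr rfl hcg, Finset.sum_const, nsmul_eq_mul,
              mul_inv_cancel₀ (ne_of_gt hApos)]
          rwa [h2] at h1
      obtain ⟨x, hxS, hVx⟩ := hsur y hy
      have hPc : ∀ a : ℕ, P (fun _ => a) a = 1 := by
        intro a; rw [P_const hfix]; simp [stdBasis]
      have hx0 : ∀ n, n ∉ A → x n = 0 := by
        intro q hq
        have h1 : x q ^ m ≤ psoV m P x q := by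
          have := pow_le_psoV hP hxS q q
          rwa [hPc q, one_mul] at this
        have h2 : psoV m P x q = 0 := by rw [hVx]; simp [hydef, hq]
        have h3 : x q ^ m ≤ 0 := h1.trans h2.le
        have h4 : 0 ≤ x q ^ m := pow_nonneg (hxS.1 q) m
        have : x q ^ m = 0 := le_antisymm h3 h4
        exact pow_eq_zero_iff (by omega) |>.mp this
      have hxpos : ∀ a ∈ A, 0 < x a := by
        intro a ha
        rcases (hxS.1 a).lt_or_eq with h | h
        · exact h
        exfalso
        have hxC : ∀ q, q ∉ A.erase a → x q = 0 := by
          intro q hq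
          by_cases hqa : q = a
          · rw [hqa, ← h]
          · exact hx0 q (fun hqA => hq (Finset.mem_erase.mpr ⟨hqa, hqA⟩))
        have hKLC : ∀ (i : Fin m → ℕ) (k : ℕ), (∀ j, i j ∈ A.erase a) → k ∉ A.erase a →
            P i k = 0 := by
          intro i k hi hk
          refine IH i k ?_ (fun j hj => hk (hj ▸ hi j))
          have hsub : Finset.image i Finset.univ ⊆ A.erase a := by
            intro b hb
            obtain ⟨j, -, rfl⟩ := Finset.mem_image.mp hb
            exact hi j
          have h1 := Finset.card_le_card hsub
          have h2 := Finset.card_erase_of_mem ha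
          omega
        have hzero : psoV m P x a = 0 :=
          psoV_eq_zero_of_supp hP (A.erase a) hKLC hxC (Finset.notMem_erase a A)
        rw [hVx] at hzero
        simp only [hydef, if_pos ha] at hzero
        exact absurd hzero (by positivity)
      have hterm : P i0 k0 * ∏ j, x (i0 j) ≤ psoV m P x k0 := term_le_psoV hP hxS i0 k0
      have hy0 : psoV m P x k0 = 0 := by rw [hVx]; simp [hydef, hk0A]
      have hprodpos : 0 < ∏ j, x (i0 j) :=
        Finset.prod_pos fun j _ =>
          hxpos _ (Finset.mem_image_of_mem _ (Finset.mem_univ j))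
      have hmz : P i0 k0 * ∏ j, x (i0 j) = 0 :=
        le_antisymm (hterm.trans hy0.le) (mul_nonneg (hP.1 _ _) hprodpos.le)
      rcases mul_eq_zero.mp hmz with h | h
      · exact h
      · exact absurd h hprodpos.ne'


theorem stmt18 (m : ℕ) (hm : 1 ≤ m) (P : (Fin m → ℕ) → ℕ → ℝ)
    (hP : IsStochastic m P) (hsym : HypSymm m P)
    (hsur : SurjOnS m P)
    (hfix : ∀ i : ℕ, psoV m P (stdBasis i) = stdBasis i)
    (A : Finset ℕ) (hA : A.Nonempty) (hcard : A.card ≤ m) :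
    (∀ x : ℕ → ℝ, inIntFace (A : Set ℕ) x → inIntFace (A : Set ℕ) (psoV m P x)) ∧
    (∀ y : ℕ → ℝ, inIntFace (A : Set ℕ) y →
      ∃ x : ℕ → ℝ, inIntFace (A : Set ℕ) x ∧ psoV m P x = y) ∧
    (∀ x : ℕ → ℝ, inS x → inIntFace (A : Set ℕ) (psoV m P x) →
      inIntFace (A : Set ℕ) x) := by
  have KL := keyLemma hm hP hsur hfix
  have hKLF : ∀ (B : Finset ℕ) (i : Fin m → ℕ) (k : ℕ), (∀ j, i j ∈ B) → k ∉ B → P i k = 0 :=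
    fun B i k hi hk => KL i k (fun j hj => hk (hj ▸ hi j))
  have hPc : ∀ a : ℕ, P (fun _ => a) a = 1 := fun a => by
    rw [P_const hfix]; simp [stdBasis]
  have part3 : ∀ x : ℕ → ℝ, inS x → inIntFace (A : Set ℕ) (psoV m P x) →
      inIntFace (A : Set ℕ) x := by
    rintro x hx ⟨hVS, hVpos, hV0⟩
    have hx0 : ∀ q : ℕ, q ∉ (A : Set ℕ) → x q = 0 := by
      intro q hq
      have h1 : x q ^ m ≤ psoV m P x q := by
        have := pow_le_psoV hP hx q q
        rwa [hPc q, one_mul] at this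
      have h2 : psoV m P x q = 0 := hV0 q hq
      have h3 := le_antisymm (h1.trans h2.le) (pow_nonneg (hx.1 q) m)
      exact pow_eq_zero_iff (by omega) |>.mp h3
    refine ⟨hx, ?_, hx0⟩
    intro a ha
    rcases (hx.1 a).lt_or_eq with h | h
    · exact h
    exfalso
    have hxC : ∀ q, q ∉ A.erase a → x q = 0 := by
      intro q hq
      by_cases hqa : q = a
      · rw [hqa, ← h]
      · refine hx0 q (fun hqA => hq (Finset.mem_erase.mpr ⟨hqa, Finset.mem_coe.mp hqA⟩))
    have hz := psoV_eq_zero_of_supp hP (A.erase a) (hKLF _) hxC (Finset.notMem_erase a A)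
    exact absurd hz (ne_of_gt (hVpos a ha))
  have part1 : ∀ x : ℕ → ℝ, inIntFace (A : Set ℕ) x → inIntFace (A : Set ℕ) (psoV m P x) := by
    rintro x ⟨hxS, hxpos, hx0⟩
    refine ⟨⟨fun k => psoV_nonneg hP hxS.1 k, hasSum_psoV hP hxS⟩, ?_, ?_⟩
    · intro a ha
      have h1 : x a ^ m ≤ psoV m P x a := by
        have := pow_le_psoV hP hxS a a
        rwa [hPc a, one_mul] at this
      exact lt_of_lt_of_le (pow_pos (hxpos a ha) m) h1
    · intro k hk
      exact psoV_eq_zero_of_supp hP A (hKLF A)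
        (fun q hq => hx0 q (fun hmem => hq (Finset.mem_coe.mp hmem)))
        (fun hmem => hk (Finset.mem_coe.mpr hmem))
  refine ⟨part1, ?_, part3⟩
  intro y hy
  obtain ⟨x, hxS, hVx⟩ := hsur y hy.1
  exact ⟨x, part3 x hxS (by rw [hVx]; exact hy), hVx⟩
end
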